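/- arXiv:2304.06673 — 3 statements merged into one kernel-verified Lean document; each statement's English description precedes it below -/
import Mathlib

section
/- (Weighted trace-at-t₀ estimate, second energy inequality of the Third Step) Fix λ > 0. There exist constants C > 0 and s₀ ≥ 1 (depending only on T, λ, M) such that for every s ≥ s₀ and every function y : ℝ^d × [0,T] → ℝ which is continuous and bounded on Ω × [0,t₀] together with its continuous time derivative ∂_ty: ∫_Ω |y(x,t₀)|² e^{2sα(x,t₀)} dx ≤ (C/√s) ∫₀^{t₀} ∫_Ω ( (sφ(x,t))⁻¹ |∂_ty(x,t)|² + s³ φ(x,t)³ |y(x,t)|² ) e^{2sα(x,t)} dx dt. -/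
open MeasureTheory Real Set
open Filter

lemma cube_exp_bound (a v : ℝ) (ha : 0 < a) (hv : 0 ≤ v) :
    v^3 * Real.exp (-(a*v)) ≤ 27/a^3 := by
  have h1 : a*v/3 ≤ Real.exp (a*v/3) := by linarith [Real.add_one_le_exp (a*v/3)]
  have hep : (0:ℝ) < Real.exp (-(a*v/3)) := Real.exp_pos _
  have h2 : (a*v/3) * Real.exp (-(a*v/3)) ≤ 1 := by
    have := mul_le_mul_of_nonneg_right h1 hep.le
    rwa [← Real.exp_add, add_neg_cancel, Real.exp_zero] at this
  have h3 : ((a*v/3) * Real.exp (-(a*v/3)))^3 ≤ 1 :=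
    pow_le_one₀ (by positivity) h2
  have h4 : ((a*v/3) * Real.exp (-(a*v/3)))^3
      = (a^3*v^3/27) * Real.exp (-(a*v)) := by
    rw [mul_pow, ← Real.exp_nat_mul]
    ring_nf
  rw [h4] at h3
  rw [le_div_iff₀ (by positivity)]
  nlinarith [Real.exp_pos (-(a*v))]

lemma aux_cube (A l E c s : ℝ) (hA : 0 < A) (hl : 0 < l) (hs : 0 < s) (hc : 0 < c)
    (hAE : A - E ≤ -c) :
    s^3*(A/l)^3*Real.exp (2*s*((A-E)/l)) ≤ A^3*(27/(2*c)^3) := by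
  have hv : 0 < s/l := by positivity
  have hexp : Real.exp (2*s*((A-E)/l)) ≤ Real.exp (-((2*c)*(s/l))) := by
    apply Real.exp_le_exp.mpr
    have e1 : 2*s*((A-E)/l) = (2*s*(A-E))/l := by ring
    have e2 : -((2*c)*(s/l)) = (2*s*(-c))/l := by ring
    rw [e1, e2, div_le_div_iff₀ hl hl]
    nlinarith [mul_le_mul_of_nonneg_right (mul_le_mul_of_nonneg_left hAE (show (0:ℝ) ≤ 2*s by positivity)) hl.le]
  calc s^3*(A/l)^3*Real.exp (2*s*((A-E)/l))
      ≤ s^3*(A/l)^3*Real.exp (-((2*c)*(s/l))) := by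
        apply mul_le_mul_of_nonneg_left hexp (by positivity)
    _ = A^3 * ((s/l)^3 * Real.exp (-((2*c)*(s/l)))) := by
        rw [div_pow, div_pow]; ring
    _ ≤ A^3 * (27/(2*c)^3) := by
        apply mul_le_mul_of_nonneg_left (cube_exp_bound _ _ (by positivity) hv.le) (by positivity)

lemma amgm_aux (c a b : ℝ) (hc : 0 < c) : 2*a*b ≤ c*b^2 + c⁻¹*a^2 := by
  have h2 : c * c⁻¹ = 1 := mul_inv_cancel₀ hc.ne'
  nlinarith [mul_pos hc hc, sq_nonneg (c*b-a), mul_nonneg (sq_nonneg (c*b-a)) (inv_pos.mpr hc).le]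

lemma coef2_lem (r φ E T : ℝ) (hr : 1 ≤ r) (hφ : 0 < φ) (hφm : 4 ≤ T^2*φ) (hT : 0 < T)
    (hE : 1 ≤ E) :
    r*r^2*φ + 2*r^2*E*T*φ^2 ≤ ((1 + T^4/16 + E*T^3/2)/r)*((r^2)^3*φ^3) := by
  have hr0 : (0:ℝ) < r := lt_of_lt_of_le one_pos hr
  rw [div_mul_eq_mul_div, le_div_iff₀ hr0]
  have h16 : 16 ≤ T^4*φ^2 := by nlinarith
  have hr46 : r^4 ≤ r^6 := pow_le_pow_right₀ hr (by norm_num)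
  have hr36 : r^3 ≤ r^6 := pow_le_pow_right₀ hr (by norm_num)
  have p1 : 16*(r^4*φ) ≤ (T^4*φ^2)*(r^6*φ) := by
    apply mul_le_mul h16 (mul_le_mul_of_nonneg_right hr46 hφ.le) (by positivity) (by positivity)
  have p2 : 4*(E*T*(r^6*φ^2)) ≤ (T^2*φ)*(E*T*(r^6*φ^2)) :=
    mul_le_mul_of_nonneg_right hφm (by positivity)
  have p3 : 2*E*T*(r^3*φ^2) ≤ 2*E*T*(r^6*φ^2) := by
    apply mul_le_mul_of_nonneg_left (mul_le_mul_of_nonneg_right hr36 (by positivity)) (by positivity)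
  nlinarith [pow_pos hr0 6, mul_nonneg (pow_pos hr0 6).le (mul_nonneg (mul_nonneg hφ.le hφ.le) hφ.le)]


lemma pointwise_bound (T s r A E t u v : ℝ)
    (hT : 0 < T) (hr1 : 1 ≤ r) (hrs : r^2 = s)
    (hA1 : 1 ≤ A) (hAE : A ≤ E) (hE1 : 1 ≤ E)
    (ht0 : 0 < t) (ht1 : t ≤ T/2) :
    (2*u*v + u^2 * (2*s*((E - A)*(T-2*t)/(t*(T-t))^2))) * Real.exp (2*s*((A-E)/(t*(T-t))))
      ≤ ((1 + T^4/16 + E*T^3/2)/r) *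
        (((s*(A/(t*(T-t))))⁻¹*|v|^2 + s^3*(A/(t*(T-t)))^3*|u|^2) *
          Real.exp (2*s*((A-E)/(t*(T-t))))) := by
  have hr0 : (0:ℝ) < r := lt_of_lt_of_le one_pos hr1
  have hs1 : (1:ℝ) ≤ s := by nlinarith
  have hs0 : (0:ℝ) < s := lt_of_lt_of_le one_pos hs1
  have hl : (0:ℝ) < t*(T-t) := by nlinarith
  set l := t*(T-t) with hl_def
  set φ := A/l with hφ_def
  have hφ : 0 < φ := by positivity
  have hφm : 4 ≤ T^2*φ := by
    rw [hφ_def, mul_div_assoc', le_div_iff₀ hl]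
    nlinarith [sq_nonneg (T-2*t)]
  set C := 1 + T^4/16 + E*T^3/2 with hC_def
  have hC1 : 1 ≤ C := by
    have h1 : (0:ℝ) ≤ T^4/16 := by positivity
    have h2 : (0:ℝ) ≤ E*T^3/2 := by positivity
    rw [hC_def]; linarith
  have hW : (0:ℝ) < Real.exp (2*s*((A-E)/l)) := Real.exp_pos _
  have hc : (0:ℝ) < (r*s*φ)⁻¹ := by positivity
  -- step 1 : bracket bound
  have hb1 : 2*u*v ≤ (r*s*φ)⁻¹ * |v|^2 + (r*s*φ) * |u|^2 := by
    have h := amgm_aux ((r*s*φ)⁻¹) |u| |v| hc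
    rw [inv_inv] at h
    have h2 := le_abs_self (u*v)
    rw [abs_mul] at h2
    linarith
  have hb2 : u^2 * (2*s*((E - A)*(T-2*t)/l^2)) ≤ (2*s*E*T*φ^2) * |u|^2 := by
    have hnum : (E - A)*(T-2*t) ≤ E*T*A^2 := by
      have q1 : (E - A)*(T-2*t) ≤ E*T := by
        apply mul_le_mul (by linarith) (by linarith) (by linarith) (by linarith)
      have q2 : E*T ≤ E*T*A^2 := by
        nlinarith [mul_nonneg (mul_nonneg (show (0:ℝ) ≤ E by linarith) hT.le) (show (0:ℝ) ≤ A^2 - 1 by nlinarith)]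
      linarith
    have hP : (E - A)*(T-2*t)/l^2 ≤ E*T*φ^2 := by
      have he : E*T*φ^2 = (E*T*A^2)/l^2 := by rw [hφ_def, div_pow]; ring
      rw [he]
      exact div_le_div_of_nonneg_right hnum (by positivity)
    have hu : u^2 = |u|^2 := (sq_abs u).symm
    calc u^2 * (2*s*((E - A)*(T-2*t)/l^2)) ≤ u^2 * (2*s*(E*T*φ^2)) := by
          apply mul_le_mul_of_nonneg_left _ (sq_nonneg u)
          apply mul_le_mul_of_nonneg_left hP (by positivity)
      _ = (2*s*E*T*φ^2) * |u|^2 := by rw [← hu]; ring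
  -- step 2 : coefficient comparison
  have hc1 : (r*s*φ)⁻¹ ≤ C/r * (s*φ)⁻¹ := by
    have e : (r*s*φ)⁻¹ = r⁻¹ * (s*φ)⁻¹ := by
      rw [mul_assoc, mul_inv]
    rw [e, div_eq_mul_inv]
    have : r⁻¹ ≤ C * r⁻¹ := by
      nlinarith [mul_nonneg (sub_nonneg.mpr hC1) (inv_pos.mpr hr0).le]
    calc r⁻¹ * (s*φ)⁻¹ ≤ (C * r⁻¹) * (s*φ)⁻¹ := by
          apply mul_le_mul_of_nonneg_right this (by positivity)
      _ = C * r⁻¹ * (s*φ)⁻¹ := by ring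
  have hc2 : r*s*φ + 2*s*E*T*φ^2 ≤ C/r * (s^3*φ^3) := by
    rw [← hrs]
    have := coef2_lem r φ E T hr1 hφ hφm hT hE1
    calc r*r^2*φ + 2*r^2*E*T*φ^2 ≤ (C/r)*((r^2)^3*φ^3) := this
      _ = C/r * ((r^2)^3*φ^3) := rfl
  -- combine
  have hbr : 2*u*v + u^2 * (2*s*((E - A)*(T-2*t)/l^2))
      ≤ C/r * ((s*φ)⁻¹*|v|^2 + s^3*φ^3*|u|^2) := by
    have t1 : (r*s*φ)⁻¹ * |v|^2 ≤ (C/r * (s*φ)⁻¹) * |v|^2 :=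
      mul_le_mul_of_nonneg_right hc1 (sq_nonneg _)
    have t2 : (r*s*φ) * |u|^2 + (2*s*E*T*φ^2) * |u|^2 ≤ (C/r * (s^3*φ^3)) * |u|^2 := by
      have := mul_le_mul_of_nonneg_right hc2 (sq_nonneg |u|)
      calc (r*s*φ) * |u|^2 + (2*s*E*T*φ^2) * |u|^2
          = (r*s*φ + 2*s*E*T*φ^2) * |u|^2 := by ring
        _ ≤ (C/r * (s^3*φ^3)) * |u|^2 := this
    calc 2*u*v + u^2 * (2*s*((E - A)*(T-2*t)/l^2))
        ≤ ((r*s*φ)⁻¹ * |v|^2 + (r*s*φ) * |u|^2) + (2*s*E*T*φ^2) * |u|^2 := by linarith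
      _ ≤ (C/r * (s*φ)⁻¹) * |v|^2 + (C/r * (s^3*φ^3)) * |u|^2 := by linarith
      _ = C/r * ((s*φ)⁻¹*|v|^2 + s^3*φ^3*|u|^2) := by ring
  calc (2*u*v + u^2 * (2*s*((E - A)*(T-2*t)/l^2))) * Real.exp (2*s*((A-E)/l))
      ≤ (C/r * ((s*φ)⁻¹*|v|^2 + s^3*φ^3*|u|^2)) * Real.exp (2*s*((A-E)/l)) :=
        mul_le_mul_of_nonneg_right hbr hW.le
    _ = C/r * (((s*φ)⁻¹*|v|^2 + s^3*φ^3*|u|^2) * Real.exp (2*s*((A-E)/l))) := by ring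


lemma hasDerivAt_g (T s A E : ℝ) (y y' : ℝ → ℝ) (t : ℝ)
    (hy : ∀ u, HasDerivAt y (y' u) u) (hl : t*(T-t) ≠ 0) :
    HasDerivAt (fun u => y u^2 * Real.exp (2*s*((A-E)/(u*(T-u)))))
      ((2*(y t)*(y' t) + (y t)^2 * (2*s*((E - A)*(T-2*t)/(t*(T-t))^2))) *
        Real.exp (2*s*((A-E)/(t*(T-t))))) t := by
  have hden : HasDerivAt (fun u : ℝ => u*(T-u)) (T-2*t) t := by
    have h := (hasDerivAt_id t).fun_mul ((hasDerivAt_id t).const_sub T)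
    refine h.congr_deriv ?_
    simp only [id_eq]
    ring
  have hquot : HasDerivAt (fun u => 2*s*((A-E)/(u*(T-u))))
      (2*s*((E-A)*(T-2*t)/(t*(T-t))^2)) t := by
    have h := ((hasDerivAt_const t (A-E)).fun_div hden hl).const_mul (2*s)
    refine h.congr_deriv ?_
    ring
  have hexp := hquot.exp
  have hy2 : HasDerivAt (fun u => y u^2) (2*(y t)*(y' t)) t := by
    have h := (hy t).fun_pow 2
    refine h.congr_deriv ?_
    norm_num
  have h := hy2.fun_mul hexp
  refine h.congr_deriv ?_
  ring

lemma key_onevar (T s r A E c B : ℝ) (y y' : ℝ → ℝ)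
    (hT : 0 < T) (hr1 : 1 ≤ r) (hrs : r^2 = s)
    (hA1 : 1 ≤ A) (hAE : A ≤ E) (hE1 : 1 ≤ E)
    (hc : 0 < c) (hAEc : A - E ≤ -c)
    (hy : ∀ u, HasDerivAt y (y' u) u)
    (hy'c : ContinuousOn y' (Icc 0 (T/2)))
    (hB : ∀ t ∈ Icc (0:ℝ) (T/2), |y t| ≤ B ∧ |y' t| ≤ B) :
    y (T/2)^2 * Real.exp (2*s*((A-E)/((T/2)*(T-T/2))))
      ≤ ((1 + T^4/16 + E*T^3/2)/r) * ∫ t in Ioo (0:ℝ) (T/2),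
          ((s*(A/(t*(T-t))))⁻¹*|y' t|^2 + s^3*(A/(t*(T-t)))^3*|y t|^2) *
            Real.exp (2*s*((A-E)/(t*(T-t)))) := by
  have hr0 : (0:ℝ) < r := lt_of_lt_of_le one_pos hr1
  have hs1 : (1:ℝ) ≤ s := by nlinarith
  have hs0 : (0:ℝ) < s := lt_of_lt_of_le one_pos hs1
  have ht₀ : (0:ℝ) < T/2 := by linarith
  have hB0 : 0 ≤ B := le_trans (abs_nonneg _) (hB 0 ⟨le_refl 0, ht₀.le⟩).1
  set C := 1 + T^4/16 + E*T^3/2 with hC_def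
  have hC0 : 0 < C := by
    have h1 : (0:ℝ) ≤ T^4/16 := by positivity
    have h2 : (0:ℝ) ≤ E*T^3/2 := by positivity
    rw [hC_def]; linarith
  set h : ℝ → ℝ := fun t =>
    ((s*(A/(t*(T-t))))⁻¹*|y' t|^2 + s^3*(A/(t*(T-t)))^3*|y t|^2) *
      Real.exp (2*s*((A-E)/(t*(T-t)))) with hh_def
  clear_value C h
  have hcy : Continuous y := continuous_iff_continuousAt.mpr fun t => (hy t).continuousAt
  have hlpos : ∀ t : ℝ, 0 < t → t ≤ T/2 → 0 < t*(T-t) := by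
    intro t h1 h2; nlinarith
  -- nonnegativity of h
  have hh0 : ∀ t : ℝ, 0 < t → t ≤ T/2 → 0 ≤ h t := by
    intro t h1 h2
    have hl := hlpos t h1 h2
    have hφ : 0 < A/(t*(T-t)) := div_pos (by linarith) hl
    simp only [hh_def]
    apply mul_nonneg
    · apply add_nonneg
      · exact mul_nonneg (inv_nonneg.mpr (by positivity)) (sq_nonneg _)
      · exact mul_nonneg (by positivity) (sq_nonneg _)
    · exact (Real.exp_pos _).le
  -- upper bound for h
  have hhbd : ∀ t : ℝ, 0 < t → t ≤ T/2 →
      h t ≤ T^2/4*B^2 + A^3*(27/(2*c)^3)*B^2 := by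
    intro t h1 h2
    have hl := hlpos t h1 h2
    have hφ : 0 < A/(t*(T-t)) := div_pos (by linarith) hl
    have hφm : 4/T^2 ≤ A/(t*(T-t)) := by
      rw [div_le_div_iff₀ (by positivity) hl]
      nlinarith [sq_nonneg (T-2*t)]
    have hinv : (s*(A/(t*(T-t))))⁻¹ ≤ T^2/4 := by
      have h4 : (0:ℝ) < 4/T^2 := by positivity
      have hge : 4/T^2 ≤ s*(A/(t*(T-t))) := by nlinarith
      calc (s*(A/(t*(T-t))))⁻¹ ≤ (4/T^2)⁻¹ := by
            apply inv_anti₀ h4 hge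
        _ = T^2/4 := by rw [inv_div]
    have hW1 : Real.exp (2*s*((A-E)/(t*(T-t)))) ≤ 1 := by
      apply Real.exp_le_one_iff.mpr
      apply mul_nonpos_of_nonneg_of_nonpos (by positivity)
      apply div_nonpos_of_nonpos_of_nonneg (by linarith) hl.le
    have hcube := aux_cube A (t*(T-t)) E c s (by linarith) hl hs0 hc hAEc
    have hy2 : |y t|^2 ≤ B^2 := by
      have := (hB t ⟨h1.le, h2⟩).1
      nlinarith [abs_nonneg (y t)]
    have hy'2 : |y' t|^2 ≤ B^2 := by
      have := (hB t ⟨h1.le, h2⟩).2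
      nlinarith [abs_nonneg (y' t)]
    have hWpos := Real.exp_pos (2*s*((A-E)/(t*(T-t))))
    simp only [hh_def]
    calc ((s*(A/(t*(T-t))))⁻¹*|y' t|^2 + s^3*(A/(t*(T-t)))^3*|y t|^2) *
          Real.exp (2*s*((A-E)/(t*(T-t))))
        = (s*(A/(t*(T-t))))⁻¹*|y' t|^2 * Real.exp (2*s*((A-E)/(t*(T-t))))
          + (s^3*(A/(t*(T-t)))^3 * Real.exp (2*s*((A-E)/(t*(T-t)))))*|y t|^2 := by ring
      _ ≤ T^2/4*B^2*1 + A^3*(27/(2*c)^3)*B^2 := by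
          apply add_le_add
          · calc (s*(A/(t*(T-t))))⁻¹*|y' t|^2 * Real.exp (2*s*((A-E)/(t*(T-t))))
                ≤ T^2/4*B^2 * 1 := by
                  apply mul_le_mul _ hW1 hWpos.le (by positivity)
                  apply mul_le_mul hinv hy'2 (sq_nonneg _) (by positivity)
            _ = T^2/4*B^2*1 := by ring
          · apply mul_le_mul _ hy2 (sq_nonneg _) (by positivity)
            exact hcube
      _ = T^2/4*B^2 + A^3*(27/(2*c)^3)*B^2 := by ring
  set G : ℝ → ℝ := fun t =>
    (2*(y t)*(y' t) + (y t)^2 * (2*s*((E - A)*(T-2*t)/(t*(T-t))^2))) *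
      Real.exp (2*s*((A-E)/(t*(T-t)))) with hG_def
  clear_value G
  -- continuity of h and G on nice sets
  have hgen : ∀ S : Set ℝ, S ⊆ Icc 0 (T/2) → (∀ t ∈ S, 0 < t) →
      ContinuousOn h S ∧ ContinuousOn G S := by
    intro S hS hSpos
    have hlc : ContinuousOn (fun t : ℝ => t*(T-t)) S :=
      (continuous_id.mul (continuous_const.sub continuous_id)).continuousOn
    have hlne : ∀ t ∈ S, t*(T-t) ≠ 0 := fun t ht => (hlpos t (hSpos t ht) (hS ht).2).ne'
    have cdiv : ContinuousOn (fun t => A/(t*(T-t))) S := continuousOn_const.div hlc hlne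
    have cW : ContinuousOn (fun t => Real.exp (2*s*((A-E)/(t*(T-t))))) S :=
      Real.continuous_exp.comp_continuousOn (continuousOn_const.mul (continuousOn_const.div hlc hlne))
    have cy' : ContinuousOn y' S := hy'c.mono hS
    have cinv : ContinuousOn (fun t => (s*(A/(t*(T-t))))⁻¹) S := by
      apply ContinuousOn.inv₀ (continuousOn_const.mul cdiv)
      intro t ht
      have h1 := hlpos t (hSpos t ht) (hS ht).2
      have h2 : 0 < A/(t*(T-t)) := div_pos (by linarith) h1
      exact (mul_pos hs0 h2).ne'
    have cP : ContinuousOn (fun t => 2*s*((E-A)*(T-2*t)/(t*(T-t))^2)) S := by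
      apply ContinuousOn.mul continuousOn_const
      apply ContinuousOn.div _ (hlc.pow 2) (fun t ht => pow_ne_zero 2 (hlne t ht))
      exact (continuous_const.mul (continuous_const.sub (continuous_const.mul continuous_id))).continuousOn
    constructor
    · rw [hh_def]
      apply ContinuousOn.mul _ cW
      apply ContinuousOn.add
      · exact cinv.mul ((cy'.abs).pow 2)
      · exact (continuousOn_const.mul (cdiv.pow 3)).mul ((hcy.continuousOn.abs).pow 2)
    · rw [hG_def]
      apply ContinuousOn.mul _ cW
      apply ContinuousOn.add
      · exact ((continuous_const.mul hcy).continuousOn).mul cy'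
      · exact ((hcy.pow 2).continuousOn).mul cP
  -- integrability of h on Ioo 0 (T/2)
  have hint : IntegrableOn h (Ioo (0:ℝ) (T/2)) volume := by
    have hmeas : AEStronglyMeasurable h (volume.restrict (Ioo (0:ℝ) (T/2))) :=
      ((hgen (Ioo 0 (T/2)) Ioo_subset_Icc_self (fun t ht => ht.1)).1).aestronglyMeasurable
        measurableSet_Ioo
    apply Integrable.mono' (g := fun _ => T^2/4*B^2 + A^3*(27/(2*c)^3)*B^2)
      (integrableOn_const measure_Ioo_lt_top.ne) hmeas
    rw [ae_restrict_iff' measurableSet_Ioo]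
    apply ae_of_all
    intro t ht
    rw [Real.norm_eq_abs, abs_of_nonneg (hh0 t ht.1 ht.2.le)]
    exact hhbd t ht.1 ht.2.le
  -- main step for each ε
  have hstep : ∀ ε ∈ Ioo (0:ℝ) (T/2),
      y (T/2)^2 * Real.exp (2*s*((A-E)/((T/2)*(T-T/2))))
        ≤ y ε^2 * Real.exp (2*s*((A-E)/(ε*(T-ε)))) + C/r * ∫ t in Ioo (0:ℝ) (T/2), h t := by
    intro ε hε
    have hε0 := hε.1
    have hεt := hε.2
    have huIcc : uIcc ε (T/2) = Icc ε (T/2) := uIcc_of_le hεt.le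
    have hGd : ∀ t ∈ uIcc ε (T/2),
        HasDerivAt (fun u => y u^2 * Real.exp (2*s*((A-E)/(u*(T-u))))) (G t) t := by
      intro t ht
      rw [huIcc] at ht
      simp only [hG_def]
      exact hasDerivAt_g T s A E y y' t hy (hlpos t (lt_of_lt_of_le hε0 ht.1) ht.2).ne'
    have hSsub : Icc ε (T/2) ⊆ Icc 0 (T/2) := Icc_subset_Icc hε0.le le_rfl
    have hSpos : ∀ t ∈ Icc ε (T/2), 0 < t := fun t ht => lt_of_lt_of_le hε0 ht.1
    obtain ⟨hhc, hGc⟩ := hgen (Icc ε (T/2)) hSsub hSpos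
    have hGint : IntervalIntegrable G volume ε (T/2) := by
      apply ContinuousOn.intervalIntegrable
      rwa [huIcc]
    have hChint : IntervalIntegrable (fun t => C/r * h t) volume ε (T/2) := by
      apply ContinuousOn.intervalIntegrable
      rw [huIcc]
      exact continuousOn_const.mul hhc
    have heq := intervalIntegral.integral_eq_sub_of_hasDerivAt hGd hGint
    have hmono : ∫ t in ε..(T/2), G t ≤ ∫ t in ε..(T/2), C/r * h t := by
      apply intervalIntegral.integral_mono_on hεt.le hGint hChint
      intro t ht
      have h1 : 0 < t := lt_of_lt_of_le hε0 ht.1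
      simp only [hG_def, hh_def, hC_def]
      exact pointwise_bound T s r A E t (y t) (y' t) hT hr1 hrs hA1 hAE hE1 h1 ht.2
    have hchain : ∫ t in ε..(T/2), C/r * h t = C/r * ∫ t in Ioo ε (T/2), h t := by
      rw [intervalIntegral.integral_const_mul, intervalIntegral.integral_of_le hεt.le,
        integral_Ioc_eq_integral_Ioo]
    have hsub : C/r * ∫ t in Ioo ε (T/2), h t ≤ C/r * ∫ t in Ioo (0:ℝ) (T/2), h t := by
      apply mul_le_mul_of_nonneg_left _ (by positivity)
      apply setIntegral_mono_set hint
      · exact (ae_restrict_iff' measurableSet_Ioo).mpr (ae_of_all _ fun t ht => hh0 t ht.1 ht.2.le)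
      · exact HasSubset.Subset.eventuallyLE (Ioo_subset_Ioo hε0.le le_rfl)
    linarith
  -- limit as ε → 0⁺
  have hIoo_mem : Ioo (0:ℝ) (T/2) ∈ nhdsWithin (0:ℝ) (Ioi 0) :=
    Ioo_mem_nhdsGT_of_mem ⟨le_refl 0, ht₀⟩
  have htend0 : Tendsto (fun ε => y ε^2 * Real.exp (2*s*((A-E)/(ε*(T-ε)))))
      (nhdsWithin (0:ℝ) (Ioi 0)) (nhds 0) := by
    have t1 : Tendsto (fun ε : ℝ => ε*(T-ε)) (nhdsWithin (0:ℝ) (Ioi 0))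
        (nhdsWithin (0:ℝ) (Ioi 0)) := by
      apply tendsto_nhdsWithin_of_tendsto_nhds_of_eventually_within
      · have hco : Continuous fun ε : ℝ => ε*(T-ε) := continuous_id.mul (continuous_const.sub continuous_id)
        have := hco.tendsto' 0 0 (by norm_num)
        exact this.mono_left nhdsWithin_le_nhds
      · filter_upwards [hIoo_mem] with ε hε
        exact hlpos ε hε.1 hε.2.le
    have t2 : Tendsto (fun ε : ℝ => (ε*(T-ε))⁻¹) (nhdsWithin (0:ℝ) (Ioi 0)) atTop :=
      tendsto_inv_nhdsGT_zero.comp t1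
    have hneg : -(2*s*c) < 0 := neg_lt_zero.mpr (mul_pos (mul_pos two_pos hs0) hc)
    have t3 : Tendsto (fun ε : ℝ => -(2*s*c)*(ε*(T-ε))⁻¹) (nhdsWithin (0:ℝ) (Ioi 0)) atBot :=
      Tendsto.const_mul_atTop_of_neg hneg t2
    have t4 : Tendsto (fun ε : ℝ => Real.exp (-(2*s*c)*(ε*(T-ε))⁻¹))
        (nhdsWithin (0:ℝ) (Ioi 0)) (nhds 0) := Real.tendsto_exp_atBot.comp t3
    have t5 : Tendsto (fun ε : ℝ => B^2 * Real.exp (-(2*s*c)*(ε*(T-ε))⁻¹))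
        (nhdsWithin (0:ℝ) (Ioi 0)) (nhds 0) := by
      have := t4.const_mul (B^2)
      rwa [mul_zero] at this
    have ev1 : ∀ᶠ ε in nhdsWithin (0:ℝ) (Ioi 0),
        0 ≤ y ε^2 * Real.exp (2*s*((A-E)/(ε*(T-ε)))) := by
      filter_upwards [hIoo_mem] with ε hε
      exact mul_nonneg (sq_nonneg _) (Real.exp_pos _).le
    have ev2 : ∀ᶠ ε in nhdsWithin (0:ℝ) (Ioi 0),
        y ε^2 * Real.exp (2*s*((A-E)/(ε*(T-ε))))
          ≤ B^2 * Real.exp (-(2*s*c)*(ε*(T-ε))⁻¹) := by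
      filter_upwards [hIoo_mem] with ε hε
      have hl := hlpos ε hε.1 hε.2.le
      have hexp : Real.exp (2*s*((A-E)/(ε*(T-ε)))) ≤ Real.exp (-(2*s*c)*(ε*(T-ε))⁻¹) := by
        apply Real.exp_le_exp.mpr
        rw [show 2*s*((A-E)/(ε*(T-ε))) = (2*s*(A-E))*(ε*(T-ε))⁻¹ by ring,
          show -(2*s*c)*(ε*(T-ε))⁻¹ = (2*s*(-c))*(ε*(T-ε))⁻¹ by ring]
        exact mul_le_mul_of_nonneg_right
          (mul_le_mul_of_nonneg_left hAEc (mul_nonneg (by norm_num) hs0.le))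
          (inv_nonneg.mpr hl.le)
      have hy2 : y ε^2 ≤ B^2 := by
        have h2 := pow_le_pow_left₀ (abs_nonneg (y ε)) ((hB ε ⟨hε.1.le, hε.2.le⟩).1) 2
        rwa [sq_abs] at h2
      exact mul_le_mul hy2 hexp (Real.exp_pos _).le (by positivity)
    exact squeeze_zero' ev1 ev2 t5
  have htendsum : Tendsto (fun ε => y ε^2 * Real.exp (2*s*((A-E)/(ε*(T-ε))))
      + C/r * ∫ t in Ioo (0:ℝ) (T/2), h t) (nhdsWithin (0:ℝ) (Ioi 0))
      (nhds (0 + C/r * ∫ t in Ioo (0:ℝ) (T/2), h t)) :=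
    htend0.add_const _
  have hev : ∀ᶠ ε in nhdsWithin (0:ℝ) (Ioi 0),
      y (T/2)^2 * Real.exp (2*s*((A-E)/((T/2)*(T-T/2))))
        ≤ y ε^2 * Real.exp (2*s*((A-E)/(ε*(T-ε)))) + C/r * ∫ t in Ioo (0:ℝ) (T/2), h t := by
    filter_upwards [hIoo_mem] with ε hε
    exact hstep ε hε
  exact le_trans (ge_of_tendsto htendsum hev) (le_of_eq (zero_add _))


lemma h_bound (T s A E c B D u v t : ℝ) (hT : 0 < T) (hs1 : 1 ≤ s)
    (hA1 : 1 ≤ A) (hAE : A ≤ E) (hc : 0 < c) (hAEc : A - E ≤ -c)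
    (hAD : A ≤ D) (h1 : 0 < t) (h2 : t ≤ T/2)
    (hu : |u| ≤ B) (hv : |v| ≤ B) :
    ((s*(A/(t*(T-t))))⁻¹*|v|^2 + s^3*(A/(t*(T-t)))^3*|u|^2) * Real.exp (2*s*((A-E)/(t*(T-t))))
      ≤ T^2/4*B^2 + D^3*(27/(2*c)^3)*B^2 := by
  have hs0 : (0:ℝ) < s := lt_of_lt_of_le one_pos hs1
  have hl : (0:ℝ) < t*(T-t) := by nlinarith
  have hφ : 0 < A/(t*(T-t)) := div_pos (by linarith) hl
  have hφm : 4/T^2 ≤ A/(t*(T-t)) := by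
    rw [div_le_div_iff₀ (by positivity) hl]
    nlinarith [sq_nonneg (T-2*t)]
  have hinv : (s*(A/(t*(T-t))))⁻¹ ≤ T^2/4 := by
    have h4 : (0:ℝ) < 4/T^2 := by positivity
    have hge : 4/T^2 ≤ s*(A/(t*(T-t))) := by nlinarith
    calc (s*(A/(t*(T-t))))⁻¹ ≤ (4/T^2)⁻¹ := inv_anti₀ h4 hge
      _ = T^2/4 := by rw [inv_div]
  have hW1 : Real.exp (2*s*((A-E)/(t*(T-t)))) ≤ 1 := by
    apply Real.exp_le_one_iff.mpr
    apply mul_nonpos_of_nonneg_of_nonpos (by positivity)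
    apply div_nonpos_of_nonpos_of_nonneg (by linarith) hl.le
  have hcube := aux_cube A (t*(T-t)) E c s (by linarith) hl hs0 hc hAEc
  have hD3 : A^3*(27/(2*c)^3) ≤ D^3*(27/(2*c)^3) := by
    apply mul_le_mul_of_nonneg_right (pow_le_pow_left₀ (by linarith) hAD 3) (by positivity)
  have hB0 : 0 ≤ B := le_trans (abs_nonneg _) hu
  have hy2 : |u|^2 ≤ B^2 := by nlinarith [abs_nonneg u]
  have hy'2 : |v|^2 ≤ B^2 := by nlinarith [abs_nonneg v]
  have hWpos := Real.exp_pos (2*s*((A-E)/(t*(T-t))))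
  calc ((s*(A/(t*(T-t))))⁻¹*|v|^2 + s^3*(A/(t*(T-t)))^3*|u|^2) *
        Real.exp (2*s*((A-E)/(t*(T-t))))
      = (s*(A/(t*(T-t))))⁻¹*|v|^2 * Real.exp (2*s*((A-E)/(t*(T-t))))
        + (s^3*(A/(t*(T-t)))^3 * Real.exp (2*s*((A-E)/(t*(T-t)))))*|u|^2 := by ring
    _ ≤ T^2/4*B^2*1 + D^3*(27/(2*c)^3)*B^2 := by
        apply add_le_add
        · calc (s*(A/(t*(T-t))))⁻¹*|v|^2 * Real.exp (2*s*((A-E)/(t*(T-t))))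
              ≤ T^2/4*B^2 * 1 := by
                apply mul_le_mul _ hW1 hWpos.le
                  (mul_nonneg (by positivity) (sq_nonneg B))
                apply mul_le_mul hinv hy'2 (sq_nonneg _) (by positivity)
          _ = T^2/4*B^2*1 := by ring
        · apply mul_le_mul _ hy2 (sq_nonneg _) (mul_nonneg (pow_nonneg (by linarith) 3) (by positivity))
          exact le_trans hcube hD3
    _ = T^2/4*B^2 + D^3*(27/(2*c)^3)*B^2 := by ring


/-- Weighted trace-at-`t₀` estimate (second energy inequality of the Third Step):
`∫_Ω |y(x,t₀)|²e^{2sα(x,t₀)}dx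
  ≤ (C/√s)∫₀^{t₀}∫_Ω ((sφ)⁻¹|∂_ty|² + s³φ³|y|²)e^{2sα} dx dt`. -/
theorem trace_estimate_second
    (d : ℕ) (hd : 1 ≤ d)
    (Ω : Set (Fin d → ℝ)) (hΩb : Bornology.IsBounded Ω) (hΩm : MeasurableSet Ω)
    (T : ℝ) (hT : 0 < T)
    (M : ℝ) (hM : 1 ≤ M)
    (η : (Fin d → ℝ) → ℝ) (hηmeas : Measurable η)
    (hη : ∀ x ∈ Ω, 1 ≤ η x ∧ η x ≤ M)
    (lam : ℝ) (hlam : 0 < lam) :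
    ∃ C > 0, ∃ s₀ ≥ (1 : ℝ), ∀ s ≥ s₀,
      ∀ y y' : (Fin d → ℝ) → ℝ → ℝ,
        (∀ x : Fin d → ℝ, ∀ t : ℝ, HasDerivAt (y x) (y' x t) t) →
        ContinuousOn (fun q : (Fin d → ℝ) × ℝ => y q.1 q.2) (Ω ×ˢ Icc 0 (T / 2)) →
        ContinuousOn (fun q : (Fin d → ℝ) × ℝ => y' q.1 q.2) (Ω ×ˢ Icc 0 (T / 2)) →
        (∃ B : ℝ, ∀ x ∈ Ω, ∀ t ∈ Icc (0 : ℝ) (T / 2),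
          |y x t| ≤ B ∧ |y' x t| ≤ B) →
        (∫ x in Ω,
            |y x (T / 2)| ^ 2 *
              exp (2 * s * ((exp (lam * η x) - exp (2 * lam * M)) /
                ((T / 2) * (T - T / 2)))))
          ≤ (C / Real.sqrt s) *
            ∫ t in Ioo (0 : ℝ) (T / 2), ∫ x in Ω,
              ((s * (exp (lam * η x) / (t * (T - t))))⁻¹ * |y' x t| ^ 2 +
                  s ^ 3 * (exp (lam * η x) / (t * (T - t))) ^ 3 * |y x t| ^ 2) *
                exp (2 * s * ((exp (lam * η x) - exp (2 * lam * M)) / (t * (T - t)))) := by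
  have ht₀ : (0:ℝ) < T/2 := by linarith
  have hE1 : (1:ℝ) ≤ Real.exp (2*lam*M) := Real.one_le_exp (by nlinarith)
  have hc : (0:ℝ) < Real.exp (2*lam*M) - Real.exp (lam*M) := by
    have := Real.exp_lt_exp.mpr (show lam*M < 2*lam*M by nlinarith)
    linarith
  set c := Real.exp (2*lam*M) - Real.exp (lam*M) with hc_def
  refine ⟨1 + T^4/16 + Real.exp (2*lam*M)*T^3/2, ?_, 1, le_refl 1, ?_⟩
  · have h4 := pow_pos hT 4
    have h3 := mul_pos (Real.exp_pos (2*lam*M)) (pow_pos hT 3)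
    nlinarith
  intro s hs1 y y' hyd hyc hy'c hyB
  obtain ⟨B, hB⟩ := hyB
  have hs0 : (0:ℝ) < s := lt_of_lt_of_le one_pos hs1
  have hr1 : 1 ≤ Real.sqrt s := Real.one_le_sqrt.mpr hs1
  have hr0 : (0:ℝ) < Real.sqrt s := lt_of_lt_of_le one_pos hr1
  have hrs : Real.sqrt s^2 = s := Real.sq_sqrt hs0.le
  -- per-x facts
  have hA1 : ∀ x ∈ Ω, 1 ≤ Real.exp (lam * η x) := fun x hx =>
    Real.one_le_exp (mul_nonneg hlam.le (by linarith [(hη x hx).1]))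
  have hAM : ∀ x ∈ Ω, Real.exp (lam * η x) ≤ Real.exp (lam*M) := fun x hx =>
    Real.exp_le_exp.mpr (mul_le_mul_of_nonneg_left (hη x hx).2 hlam.le)
  have hAE : ∀ x ∈ Ω, Real.exp (lam * η x) ≤ Real.exp (2*lam*M) := fun x hx =>
    le_trans (hAM x hx) (by rw [hc_def] at hc; linarith)
  have hAEc : ∀ x ∈ Ω, Real.exp (lam * η x) - Real.exp (2*lam*M) ≤ -c := fun x hx => by
    have := hAM x hx
    rw [hc_def]
    linarith
  -- empty case
  rcases Set.eq_empty_or_nonempty Ω with hΩe | ⟨x₀, hx₀⟩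
  · simp [hΩe]
  have hB0 : 0 ≤ B := le_trans (abs_nonneg _) (hB x₀ hx₀ 0 ⟨le_refl 0, ht₀.le⟩).1
  -- the per-x key inequality
  have hkey : ∀ x ∈ Ω,
      |y x (T/2)|^2 * Real.exp (2*s*((Real.exp (lam*η x) - Real.exp (2*lam*M))/((T/2)*(T-T/2))))
        ≤ ((1 + T^4/16 + Real.exp (2*lam*M)*T^3/2)/Real.sqrt s) *
            ∫ t in Ioo (0:ℝ) (T/2),
              ((s*(Real.exp (lam*η x)/(t*(T-t))))⁻¹*|y' x t|^2
                + s^3*(Real.exp (lam*η x)/(t*(T-t)))^3*|y x t|^2) *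
                Real.exp (2*s*((Real.exp (lam*η x) - Real.exp (2*lam*M))/(t*(T-t)))) := by
    intro x hx
    rw [sq_abs]
    apply key_onevar T s (Real.sqrt s) (Real.exp (lam*η x)) (Real.exp (2*lam*M)) c B
      (y x) (y' x) hT hr1 hrs (hA1 x hx) (hAE x hx) hE1 hc (hAEc x hx) (hyd x)
    · exact hy'c.comp ((continuous_const.prodMk continuous_id).continuousOn)
        (fun t ht => Set.mk_mem_prod hx ht)
    · exact fun t ht => hB x hx t ht
  -- measurability helpers
  have hmA : Measurable fun q : (Fin d → ℝ) × ℝ => Real.exp (lam * η q.1) :=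
    Real.measurable_exp.comp ((hηmeas.comp measurable_fst).const_mul lam)
  have hml : Measurable fun q : (Fin d → ℝ) × ℝ => q.2*(T-q.2) :=
    measurable_snd.mul (measurable_const.sub measurable_snd)
  have hmφ : Measurable fun q : (Fin d → ℝ) × ℝ => Real.exp (lam * η q.1)/(q.2*(T-q.2)) :=
    hmA.div hml
  have hmW : Measurable fun q : (Fin d → ℝ) × ℝ =>
      Real.exp (2*s*((Real.exp (lam * η q.1) - Real.exp (2*lam*M))/(q.2*(T-q.2)))) :=
    Real.measurable_exp.comp (((hmA.sub measurable_const).div hml).const_mul (2*s))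
  -- a.e. measurability of y, y' on the product
  have hprodmeas : ((volume : Measure (Fin d → ℝ)).restrict Ω).prod
      ((volume : Measure ℝ).restrict (Ioo 0 (T/2)))
      = ((volume : Measure (Fin d → ℝ)).prod (volume : Measure ℝ)).restrict
          (Ω ×ˢ Ioo 0 (T/2)) := Measure.prod_restrict _ _
  have hsub : (Ω ×ˢ Ioo (0:ℝ) (T/2)) ⊆ (Ω ×ˢ Icc (0:ℝ) (T/2)) :=
    Set.prod_mono subset_rfl Ioo_subset_Icc_self
  have hmsetp : MeasurableSet (Ω ×ˢ Ioo (0:ℝ) (T/2)) := hΩm.prod measurableSet_Ioo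
  have hY : AEMeasurable (fun q : (Fin d → ℝ) × ℝ => y q.1 q.2)
      (((volume : Measure (Fin d → ℝ)).restrict Ω).prod
        ((volume : Measure ℝ).restrict (Ioo 0 (T/2)))) := by
    rw [hprodmeas]
    exact ((hyc.mono hsub).aestronglyMeasurable hmsetp).aemeasurable
  have hY' : AEMeasurable (fun q : (Fin d → ℝ) × ℝ => y' q.1 q.2)
      (((volume : Measure (Fin d → ℝ)).restrict Ω).prod
        ((volume : Measure ℝ).restrict (Ioo 0 (T/2)))) := by
    rw [hprodmeas]
    exact ((hy'c.mono hsub).aestronglyMeasurable hmsetp).aemeasurable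
  -- the product integrand
  have hHmeas : AEStronglyMeasurable
      (Function.uncurry fun (x : Fin d → ℝ) (t : ℝ) =>
        ((s*(Real.exp (lam*η x)/(t*(T-t))))⁻¹*|y' x t|^2
          + s^3*(Real.exp (lam*η x)/(t*(T-t)))^3*|y x t|^2) *
          Real.exp (2*s*((Real.exp (lam*η x) - Real.exp (2*lam*M))/(t*(T-t)))))
      (((volume : Measure (Fin d → ℝ)).restrict Ω).prod
        ((volume : Measure ℝ).restrict (Ioo 0 (T/2)))) := by
    apply AEMeasurable.aestronglyMeasurable
    apply AEMeasurable.mul _ hmW.aemeasurable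
    apply AEMeasurable.add
    · apply AEMeasurable.mul ((measurable_const.mul hmφ).inv).aemeasurable
      exact ((continuous_abs.measurable.comp_aemeasurable hY').pow aemeasurable_const)
    · apply AEMeasurable.mul ((hmφ.pow measurable_const).const_mul (s^3)).aemeasurable
      exact ((continuous_abs.measurable.comp_aemeasurable hY).pow aemeasurable_const)
  have hfinΩ : IsFiniteMeasure ((volume : Measure (Fin d → ℝ)).restrict Ω) :=
    ⟨by rw [Measure.restrict_apply_univ]; exact hΩb.measure_lt_top⟩
  have hfinI : IsFiniteMeasure ((volume : Measure ℝ).restrict (Ioo 0 (T/2))) :=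
    ⟨by rw [Measure.restrict_apply_univ]; exact measure_Ioo_lt_top⟩
  have hprodint : Integrable
      (Function.uncurry fun (x : Fin d → ℝ) (t : ℝ) =>
        ((s*(Real.exp (lam*η x)/(t*(T-t))))⁻¹*|y' x t|^2
          + s^3*(Real.exp (lam*η x)/(t*(T-t)))^3*|y x t|^2) *
          Real.exp (2*s*((Real.exp (lam*η x) - Real.exp (2*lam*M))/(t*(T-t)))))
      (((volume : Measure (Fin d → ℝ)).restrict Ω).prod
        ((volume : Measure ℝ).restrict (Ioo 0 (T/2)))) := by
    haveI := hfinΩ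
    haveI := hfinI
    apply Integrable.mono' (g := fun _ =>
      T^2/4*B^2 + (Real.exp (lam*M))^3*(27/(2*c)^3)*B^2) (integrable_const _) hHmeas
    rw [hprodmeas, ae_restrict_iff' hmsetp]
    apply ae_of_all
    rintro ⟨x, t⟩ ⟨hx, ht⟩
    have hnn : 0 ≤ ((s*(Real.exp (lam*η x)/(t*(T-t))))⁻¹*|y' x t|^2
        + s^3*(Real.exp (lam*η x)/(t*(T-t)))^3*|y x t|^2) *
          Real.exp (2*s*((Real.exp (lam*η x) - Real.exp (2*lam*M))/(t*(T-t)))) := by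
      have hl : (0:ℝ) < t*(T-t) := by nlinarith [ht.1, ht.2]
      have hφ : 0 < Real.exp (lam*η x)/(t*(T-t)) := div_pos (Real.exp_pos _) hl
      apply mul_nonneg _ (Real.exp_pos _).le
      apply add_nonneg
      · exact mul_nonneg (inv_nonneg.mpr (by positivity)) (sq_nonneg _)
      · exact mul_nonneg (by positivity) (sq_nonneg _)
    rw [Function.uncurry, Real.norm_eq_abs, abs_of_nonneg hnn]
    exact h_bound T s (Real.exp (lam*η x)) (Real.exp (2*lam*M)) c B (Real.exp (lam*M))
      (y x t) (y' x t) t hT hs1 (hA1 x hx) (hAE x hx) hc (hAEc x hx) (hAM x hx)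
      ht.1 ht.2.le (hB x hx t ⟨ht.1.le, ht.2.le⟩).1 (hB x hx t ⟨ht.1.le, ht.2.le⟩).2
  -- integrability of the left-hand side integrand on Ω
  have hsliceY : ContinuousOn (fun x => y x (T/2)) Ω :=
    hyc.comp ((continuous_id.prodMk continuous_const).continuousOn)
      (fun x hx => Set.mk_mem_prod hx ⟨ht₀.le, le_refl _⟩)
  have hmWx : Measurable fun x : Fin d → ℝ =>
      Real.exp (2*s*((Real.exp (lam*η x) - Real.exp (2*lam*M))/((T/2)*(T-T/2)))) := by
    apply Real.measurable_exp.comp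
    apply Measurable.const_mul
    apply Measurable.div_const
    exact (Real.measurable_exp.comp (hηmeas.const_mul lam)).sub measurable_const
  have ILHS : IntegrableOn (fun x =>
      |y x (T/2)|^2 * Real.exp (2*s*((Real.exp (lam*η x) - Real.exp (2*lam*M))/((T/2)*(T-T/2)))))
      Ω volume := by
    haveI := hfinΩ
    apply Integrable.mono' (g := fun _ => B^2*1) (integrable_const _)
    · exact (((hsliceY.abs.pow 2).aestronglyMeasurable hΩm)).mul hmWx.aestronglyMeasurable
    · rw [ae_restrict_iff' hΩm]
      apply ae_of_all
      intro x hx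
      have hl : (0:ℝ) < (T/2)*(T-T/2) := by nlinarith
      have hW1 : Real.exp (2*s*((Real.exp (lam*η x) - Real.exp (2*lam*M))/((T/2)*(T-T/2)))) ≤ 1 := by
        apply Real.exp_le_one_iff.mpr
        apply mul_nonpos_of_nonneg_of_nonpos (by positivity)
        apply div_nonpos_of_nonpos_of_nonneg _ hl.le
        have := hAEc x hx
        rw [hc_def] at this
        have h2 := hAM x hx
        have h3 := Real.exp_pos (lam*M)
        linarith
      have hy2 : |y x (T/2)|^2 ≤ B^2 := by
        have h2 := pow_le_pow_left₀ (abs_nonneg (y x (T/2))) (hB x hx (T/2) ⟨ht₀.le, le_refl _⟩).1 2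
        simpa using h2
      rw [Real.norm_eq_abs, abs_of_nonneg (mul_nonneg (sq_nonneg _) (Real.exp_pos _).le)]
      exact mul_le_mul hy2 hW1 (Real.exp_pos _).le (by positivity)
  have IRHS : IntegrableOn (fun x =>
      ((1 + T^4/16 + Real.exp (2*lam*M)*T^3/2)/Real.sqrt s) *
        ∫ t in Ioo (0:ℝ) (T/2),
          ((s*(Real.exp (lam*η x)/(t*(T-t))))⁻¹*|y' x t|^2
            + s^3*(Real.exp (lam*η x)/(t*(T-t)))^3*|y x t|^2) *
            Real.exp (2*s*((Real.exp (lam*η x) - Real.exp (2*lam*M))/(t*(T-t)))))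
      Ω volume :=
    (hprodint.integral_prod_left).const_mul _
  calc (∫ x in Ω, |y x (T/2)|^2 *
        Real.exp (2*s*((Real.exp (lam*η x) - Real.exp (2*lam*M))/((T/2)*(T-T/2)))))
      ≤ ∫ x in Ω, ((1 + T^4/16 + Real.exp (2*lam*M)*T^3/2)/Real.sqrt s) *
          ∫ t in Ioo (0:ℝ) (T/2),
            ((s*(Real.exp (lam*η x)/(t*(T-t))))⁻¹*|y' x t|^2
              + s^3*(Real.exp (lam*η x)/(t*(T-t)))^3*|y x t|^2) *
              Real.exp (2*s*((Real.exp (lam*η x) - Real.exp (2*lam*M))/(t*(T-t)))) :=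
        setIntegral_mono_on ILHS IRHS hΩm hkey
    _ = ((1 + T^4/16 + Real.exp (2*lam*M)*T^3/2)/Real.sqrt s) *
          ∫ x in Ω, ∫ t in Ioo (0:ℝ) (T/2),
            ((s*(Real.exp (lam*η x)/(t*(T-t))))⁻¹*|y' x t|^2
              + s^3*(Real.exp (lam*η x)/(t*(T-t)))^3*|y x t|^2) *
              Real.exp (2*s*((Real.exp (lam*η x) - Real.exp (2*lam*M))/(t*(T-t)))) :=
        integral_const_mul _ _
    _ = ((1 + T^4/16 + Real.exp (2*lam*M)*T^3/2)/Real.sqrt s) *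
          ∫ t in Ioo (0:ℝ) (T/2), ∫ x in Ω,
            ((s*(Real.exp (lam*η x)/(t*(T-t))))⁻¹*|y' x t|^2
              + s^3*(Real.exp (lam*η x)/(t*(T-t)))^3*|y x t|^2) *
              Real.exp (2*s*((Real.exp (lam*η x) - Real.exp (2*lam*M))/(t*(T-t)))) := by
        congr 1
        exact integral_integral_swap hprodint
end

section
/- (Vanishing limit of the weighted time integral, Third Step) Let T > 0, t₀ = T/2, ℓ(t) = t(T−t), and let C₁ > 0. Then lim_{s → ∞} ∫₀^T (1/ℓ(t)) · exp(−2sC₁(1/ℓ(t) − 1/ℓ(t₀))) dt = 0, where the integral is the Lebesgue integral over (0,T). -/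
open MeasureTheory Real Set Filter

lemma aux_tendsto_exp (x c d : ℝ) (hc : 0 < c) (hd : 0 < d) :
    Tendsto (fun s : ℝ => x * Real.exp (-(2 * s * c * d))) atTop (nhds 0) := by
  have key : (fun s : ℝ => x * Real.exp (-(2 * s * c * d)))
      = fun s : ℝ => x * Real.exp (-(s * (2 * c * d))) := by
    funext s; ring_nf
  rw [key]
  have h1 : Tendsto (fun s : ℝ => s * (2 * c * d)) atTop atTop :=
    tendsto_id.atTop_mul_const (by positivity)
  have h2 : Tendsto (fun s : ℝ => -(s * (2 * c * d))) atTop atBot :=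
    tendsto_neg_atTop_atBot.comp h1
  have h3 : Tendsto (fun s : ℝ => Real.exp (-(s * (2 * c * d)))) atTop (nhds 0) :=
    Real.tendsto_exp_atBot.comp h2
  simpa using h3.const_mul x

/-- Vanishing limit of the weighted time integral (Third Step):
`∫₀^T (1/ℓ(t))·exp(−2sC₁(1/ℓ(t) − 1/ℓ(t₀))) dt → 0` as `s → ∞`. -/
theorem weighted_time_integral_vanishes
    (T : ℝ) (hT : 0 < T)
    (C₁ : ℝ) (hC₁ : 0 < C₁) :
    Tendsto
      (fun s : ℝ =>
        ∫ t in Ioo (0 : ℝ) T,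
          (1 / (t * (T - t))) *
            exp (-(2 * s * C₁ * (1 / (t * (T - t)) - 1 / ((T / 2) * (T - T / 2))))))
      atTop (nhds 0) := by
  have hL0 : (0:ℝ) < (T / 2) * (T - T / 2) := by nlinarith
  set L0 : ℝ := (T / 2) * (T - T / 2) with hL0def
  set M : ℝ := Real.exp (2 * C₁ / L0) * (1 / (2 * C₁)) with hM
  have main := MeasureTheory.tendsto_integral_filter_of_dominated_convergence
    (μ := volume.restrict (Ioo (0:ℝ) T)) (l := atTop)
    (F := fun (s : ℝ) (t : ℝ) =>
      (1 / (t * (T - t))) *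
        Real.exp (-(2 * s * C₁ * (1 / (t * (T - t)) - 1 / L0))))
    (f := fun _ => (0:ℝ))
    (bound := fun _ => M)
    (by
      filter_upwards with s
      apply Measurable.aestronglyMeasurable
      fun_prop)
    (by
      filter_upwards [eventually_ge_atTop (1:ℝ)] with s hs
      refine (ae_restrict_iff' measurableSet_Ioo).2 (ae_of_all _ ?_)
      intro t ht
      have ht1 : 0 < t := ht.1
      have ht2 : t < T := ht.2
      have hx : 0 < t * (T - t) := mul_pos ht1 (by linarith)
      set y : ℝ := 1 / (t * (T - t)) with hy
      have hypos : 0 < y := by positivity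
      have hle : t * (T - t) ≤ L0 := by rw [hL0def]; nlinarith [sq_nonneg (t - T/2)]
      have hδ : 0 ≤ y - 1 / L0 := by
        have := one_div_le_one_div_of_le hx hle
        simp only [hy]; linarith
      have hnorm : ‖y * Real.exp (-(2 * s * C₁ * (y - 1 / L0)))‖
          = y * Real.exp (-(2 * s * C₁ * (y - 1 / L0))) := by
        rw [Real.norm_eq_abs, abs_of_nonneg (by positivity)]
      rw [hnorm]
      have step1 : Real.exp (-(2 * s * C₁ * (y - 1 / L0)))
          ≤ Real.exp (-(2 * C₁ * (y - 1 / L0))) := by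
        apply Real.exp_le_exp.2
        nlinarith [mul_nonneg (mul_nonneg (by linarith : (0:ℝ) ≤ s - 1) hC₁.le) hδ]
      have step2 : Real.exp (-(2 * C₁ * (y - 1 / L0)))
          = Real.exp (-(2 * C₁ * y)) * Real.exp (2 * C₁ / L0) := by
        rw [← Real.exp_add]; congr 1; field_simp; ring
      have hey : 2 * C₁ * y ≤ Real.exp (2 * C₁ * y) := by
        have := Real.add_one_le_exp (2 * C₁ * y); linarith
      have step3 : y * Real.exp (-(2 * C₁ * y)) ≤ 1 / (2 * C₁) := by
        have heq : y * Real.exp (-(2 * C₁ * y)) = y / Real.exp (2 * C₁ * y) := by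
          rw [Real.exp_neg]; ring
        rw [heq]
        have h1 : y / Real.exp (2 * C₁ * y) ≤ y / (2 * C₁ * y) :=
          div_le_div_of_nonneg_left hypos.le (by positivity) hey
        have h2 : y / (2 * C₁ * y) = 1 / (2 * C₁) := by
          field_simp
        linarith
      calc y * Real.exp (-(2 * s * C₁ * (y - 1 / L0)))
          ≤ y * Real.exp (-(2 * C₁ * (y - 1 / L0))) := by
            exact mul_le_mul_of_nonneg_left step1 hypos.le
        _ = (y * Real.exp (-(2 * C₁ * y))) * Real.exp (2 * C₁ / L0) := by
            rw [step2]; ring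
        _ ≤ (1 / (2 * C₁)) * Real.exp (2 * C₁ / L0) := by
            exact mul_le_mul_of_nonneg_right step3 (Real.exp_pos _).le
        _ = M := by rw [hM]; ring)
    (by
      exact integrableOn_const (by simp [Real.volume_Ioo]) (by simp))
    (by
      have h1 : ∀ᵐ t ∂(volume.restrict (Ioo (0:ℝ) T)), t ≠ T / 2 := by
        refine ae_restrict_of_ae ?_
        have hv : volume ({T / 2} : Set ℝ) = 0 := Real.volume_singleton
        exact ae_iff.2 (by simp only [ne_eq, not_not, setOf_eq_eq_singleton]; exact hv)
      filter_upwards [h1, ae_restrict_mem measurableSet_Ioo] with t hne ht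
      have ht1 : 0 < t := ht.1
      have ht2 : t < T := ht.2
      have hx : 0 < t * (T - t) := mul_pos ht1 (by linarith)
      have hlt : t * (T - t) < L0 := by
        rw [hL0def]
        have : (t - T/2)^2 > 0 := by
          apply sq_pos_of_ne_zero
          intro h; apply hne; linarith [sub_eq_zero.1 h]
        nlinarith
      have hd : 0 < 1 / (t * (T - t)) - 1 / L0 := by
        have := one_div_lt_one_div_of_lt hx hlt
        linarith
      exact aux_tendsto_exp (1 / (t * (T - t))) C₁ (1 / (t * (T - t)) - 1 / L0) hC₁ hd)
  simpa using main
end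

section
/- (Absorption of the space–time weighted norm by the time-t₀ weighted norm, Third Step) Fix λ > 0. For every δ > 0 there exists s₀ > 0 such that for all s ≥ s₀ and all f ∈ L²(Ω): ∫_Ω ∫₀^T φ(x,t) |f(x)|² e^{2sα(x,t)} dt dx ≤ δ ∫_Ω φ(x,t₀) |f(x)|² e^{2sα(x,t₀)} dx. In other words, ∫_Q φ |f|² e^{2sα} dx dt = o(1) · ∫_Ω φ(·,t₀)|f|² e^{2sα(·,t₀)} dx as s → ∞, uniformly in f. -/
open MeasureTheory Real Set


set_option maxHeartbeats 1000000 in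
/-- Pointwise-in-time estimate. -/
lemma aux_pt (T L A B c s hmin ε b : ℝ) (hT : 0 < T) (hL : L = T / 2 * (T - T / 2))
    (hApos : 0 < A) (hcnn : 0 ≤ c) (hmp : 0 < hmin) (hhm : hmin ≤ B - A)
    (hsL : L ≤ s * hmin) (hspos : 0 < s) (hεpos : 0 < ε)
    (hb : b = exp (-(s * hmin * (ε ^ 2 / L ^ 2)))) (t : ℝ) (ht : t ∈ Ioo (0 : ℝ) T) :
    A / (t * (T - t)) * c * exp (2 * s * ((A - B) / (t * (T - t))))
      ≤ (A / L * c * exp (2 * s * ((A - B) / L))) *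
        ((Icc (T / 2 - ε) (T / 2 + ε)).indicator (fun _ => (1 : ℝ)) t + b) := by
  obtain ⟨ht0, htT⟩ := ht
  have hLpos : 0 < L := by rw [hL]; nlinarith
  have hℓpos : 0 < t * (T - t) := by nlinarith
  set ℓ : ℝ := t * (T - t) with hℓ
  have hℓL : ℓ ≤ L := by rw [hℓ, hL]; nlinarith [sq_nonneg (t - T / 2)]
  set u : ℝ := 1 / ℓ - 1 / L with hu
  have hunn : 0 ≤ u := by
    rw [hu]
    have := one_div_le_one_div_of_le hℓpos hℓL
    linarith
  have hBA : 0 < B - A := lt_of_lt_of_le hmp hhm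
  have hexpid : 2 * s * ((A - B) / ℓ) =
      2 * s * ((A - B) / L) + -(2 * s * (B - A) * u) := by
    rw [hu]; field_simp; ring
  have hfrac : A / ℓ = (A / L) * (1 + L * u) := by
    rw [hu]; field_simp; ring
  have core : (1 + L * u) * exp (-(2 * s * (B - A) * u)) ≤
      (Icc (T / 2 - ε) (T / 2 + ε)).indicator (fun _ => (1 : ℝ)) t + b := by
    have c1 : 1 + L * u ≤ exp (L * u) := by
      have := add_one_le_exp (L * u); linarith
    have c2 : (1 + L * u) * exp (-(2 * s * (B - A) * u)) ≤
        exp (L * u - 2 * s * (B - A) * u) := by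
      rw [show L * u - 2 * s * (B - A) * u = L * u + -(2 * s * (B - A) * u) by ring, exp_add]
      exact mul_le_mul_of_nonneg_right c1 (exp_pos _).le
    have c3 : L * u - 2 * s * (B - A) * u ≤ -(s * hmin * u) := by
      have h5 : 0 ≤ 2 * s * (B - A) - s * hmin - L := by nlinarith
      nlinarith [mul_nonneg h5 hunn]
    have c4 : (1 + L * u) * exp (-(2 * s * (B - A) * u)) ≤ exp (-(s * hmin * u)) :=
      le_trans c2 (exp_le_exp.2 c3)
    by_cases hnear : |t - T / 2| ≤ ε
    · have hmem : t ∈ Icc (T / 2 - ε) (T / 2 + ε) := by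
        have := abs_le.1 hnear
        rw [mem_Icc]; constructor <;> linarith [this.1, this.2]
      simp only [indicator_of_mem hmem]
      have h6 : exp (-(s * hmin * u)) ≤ 1 := exp_le_one_iff.2 (by nlinarith)
      have : 0 < b := by rw [hb]; exact exp_pos _
      linarith [c4]
    · have hmem : t ∉ Icc (T / 2 - ε) (T / 2 + ε) := by
        intro hmem
        apply hnear
        have := mem_Icc.1 hmem
        rw [abs_le]; constructor <;> linarith [this.1, this.2]
      simp only [indicator_of_notMem hmem]
      have hu2 : ε ^ 2 / L ^ 2 ≤ u := by
        have h7 : u = (L - ℓ) / (ℓ * L) := by rw [hu]; field_simp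
        have h8 : L - ℓ = (t - T / 2) ^ 2 := by rw [hℓ, hL]; ring
        have h9 : ε ^ 2 ≤ (t - T / 2) ^ 2 := by
          nlinarith [sq_abs (t - T / 2), not_le.1 hnear, hεpos.le, abs_nonneg (t - T / 2)]
        rw [h7, h8]
        have h10 : ℓ * L ≤ L ^ 2 := by nlinarith
        have h11 : 0 < ℓ * L := by positivity
        calc ε ^ 2 / L ^ 2 ≤ (t - T / 2) ^ 2 / L ^ 2 := by gcongr
        _ ≤ (t - T / 2) ^ 2 / (ℓ * L) :=
          div_le_div_of_nonneg_left (sq_nonneg _) h11 h10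
      have h12 : exp (-(s * hmin * u)) ≤ b := by
        rw [hb]
        apply exp_le_exp.2
        nlinarith [hu2]
      linarith [le_trans c4 h12]
  calc A / ℓ * c * exp (2 * s * ((A - B) / ℓ))
      = (A / L * c * exp (2 * s * ((A - B) / L))) *
        ((1 + L * u) * exp (-(2 * s * (B - A) * u))) := by
        rw [hexpid, exp_add, hfrac]; ring
  _ ≤ (A / L * c * exp (2 * s * ((A - B) / L))) *
        ((Icc (T / 2 - ε) (T / 2 + ε)).indicator (fun _ => (1 : ℝ)) t + b) := by
        apply mul_le_mul_of_nonneg_left core (by positivity)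

set_option maxHeartbeats 1000000 in
/-- Integrated-in-time estimate. -/
lemma aux_int (T L A B c s hmin ε b δ : ℝ) (hT : 0 < T) (hL : L = T / 2 * (T - T / 2))
    (hApos : 0 < A) (hcnn : 0 ≤ c) (hmp : 0 < hmin) (hhm : hmin ≤ B - A)
    (hsL : L ≤ s * hmin) (hspos : 0 < s) (hεpos : 0 < ε)
    (hb : b = exp (-(s * hmin * (ε ^ 2 / L ^ 2)))) (hsum : 2 * ε + T * b ≤ δ) :
    (∫ t in Ioo (0 : ℝ) T, A / (t * (T - t)) * c * exp (2 * s * ((A - B) / (t * (T - t)))))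
      ≤ δ * (A / L * c * exp (2 * s * ((A - B) / L))) := by
  have hLpos : 0 < L := by rw [hL]; nlinarith
  have hbpos : 0 < b := by rw [hb]; exact exp_pos _
  set K : ℝ := A / L * c * exp (2 * s * ((A - B) / L)) with hK
  have hKnn : 0 ≤ K := by rw [hK]; positivity
  set G : ℝ → ℝ := fun t =>
    (Icc (T / 2 - ε) (T / 2 + ε)).indicator (fun _ => (1 : ℝ)) t + b with hG
  have hGind : IntegrableOn
      (fun t => (Icc (T / 2 - ε) (T / 2 + ε)).indicator (fun _ => (1 : ℝ)) t)
      (Ioo (0 : ℝ) T) :=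
    (integrableOn_const measure_Ioo_lt_top.ne).indicator measurableSet_Icc
  have hGconst : IntegrableOn (fun _ : ℝ => b) (Ioo (0 : ℝ) T) :=
    integrableOn_const measure_Ioo_lt_top.ne
  have hGint : IntegrableOn G (Ioo (0 : ℝ) T) := hGind.add hGconst
  have step1 : (∫ t in Ioo (0 : ℝ) T,
      A / (t * (T - t)) * c * exp (2 * s * ((A - B) / (t * (T - t)))))
        ≤ ∫ t in Ioo (0 : ℝ) T, K * G t := by
    apply integral_mono_of_nonneg
    · filter_upwards [ae_restrict_mem measurableSet_Ioo] with t ht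
      obtain ⟨ht0, htT⟩ := ht
      have hℓpos : 0 < t * (T - t) := by nlinarith
      positivity
    · exact hGint.const_mul _
    · filter_upwards [ae_restrict_mem measurableSet_Ioo] with t ht
      exact aux_pt T L A B c s hmin ε b hT hL hApos hcnn hmp hhm hsL hspos hεpos hb t ht
  have hGval : (∫ t in Ioo (0 : ℝ) T, G t) ≤ 2 * ε + T * b := by
    rw [hG, integral_add hGind hGconst, setIntegral_indicator measurableSet_Icc,
      setIntegral_const, setIntegral_const]
    have hm : (volume (Ioo (0 : ℝ) T ∩ Icc (T / 2 - ε) (T / 2 + ε))).toReal ≤ 2 * ε := by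
      have h1 : volume (Ioo (0 : ℝ) T ∩ Icc (T / 2 - ε) (T / 2 + ε)) ≤
          volume (Icc (T / 2 - ε) (T / 2 + ε)) := measure_mono inter_subset_right
      have h2 : volume (Icc (T / 2 - ε) (T / 2 + ε)) = ENNReal.ofReal (2 * ε) := by
        rw [Real.volume_Icc]; congr 1; ring
      calc (volume (Ioo (0 : ℝ) T ∩ Icc (T / 2 - ε) (T / 2 + ε))).toReal
          ≤ (ENNReal.ofReal (2 * ε)).toReal := by
            apply ENNReal.toReal_mono ENNReal.ofReal_ne_top
            rw [← h2]; exact h1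
      _ = 2 * ε := ENNReal.toReal_ofReal (by positivity)
    have hvol : (volume (Ioo (0 : ℝ) T)).toReal = T := by
      rw [Real.volume_Ioo, ENNReal.toReal_ofReal (by linarith)]; ring
    rw [smul_eq_mul, smul_eq_mul, measureReal_def, measureReal_def, hvol, mul_one]
    linarith [hm]
  have step2 : (∫ t in Ioo (0 : ℝ) T, K * G t) ≤ δ * K := by
    rw [MeasureTheory.integral_const_mul]
    calc K * ∫ t in Ioo (0 : ℝ) T, G t ≤ K * (2 * ε + T * b) :=
          mul_le_mul_of_nonneg_left hGval hKnn
    _ ≤ K * δ := mul_le_mul_of_nonneg_left hsum hKnn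
    _ = δ * K := mul_comm _ _
  exact le_trans step1 step2

set_option maxHeartbeats 1000000 in
/-- Absorption of the space–time weighted norm by the time-`t₀` weighted norm
(Third Step): `∫_Q φ|f|²e^{2sα} dx dt = o(1)·∫_Ω φ(·,t₀)|f|²e^{2sα(·,t₀)} dx`
as `s → ∞`, uniformly in `f ∈ L²(Ω)`. -/
theorem spacetime_absorption
    (d : ℕ) (hd : 1 ≤ d)
    (Ω : Set (Fin d → ℝ)) (hΩb : Bornology.IsBounded Ω) (hΩm : MeasurableSet Ω)
    (T : ℝ) (hT : 0 < T)
    (M : ℝ) (hM : 1 ≤ M)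
    (η : (Fin d → ℝ) → ℝ) (hηmeas : Measurable η)
    (hη : ∀ x ∈ Ω, 1 ≤ η x ∧ η x ≤ M)
    (lam : ℝ) (hlam : 0 < lam) :
    ∀ δ > (0 : ℝ), ∃ s₀ > (0 : ℝ), ∀ s ≥ s₀,
      ∀ f : (Fin d → ℝ) → ℝ, MemLp f 2 (volume.restrict Ω) →
        (∫ x in Ω, ∫ t in Ioo (0 : ℝ) T,
            (exp (lam * η x) / (t * (T - t))) * |f x| ^ 2 *
              exp (2 * s * ((exp (lam * η x) - exp (2 * lam * M)) / (t * (T - t)))))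
          ≤ δ *
            ∫ x in Ω,
              (exp (lam * η x) / ((T / 2) * (T - T / 2))) * |f x| ^ 2 *
                exp (2 * s * ((exp (lam * η x) - exp (2 * lam * M)) /
                  ((T / 2) * (T - T / 2)))) := by
  intro δ hδ
  set L : ℝ := (T / 2) * (T - T / 2) with hL
  have hLpos : 0 < L := by rw [hL]; nlinarith
  set hmin : ℝ := exp (2 * lam * M) - exp (lam * M) with hhmin
  have hminpos : 0 < hmin := by
    have h1 : lam * M < 2 * lam * M := by nlinarith
    have := exp_lt_exp.2 h1
    simp only [hhmin]; linarith
  set ε : ℝ := min (δ / 8) (T / 4) with hε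
  have hεpos : 0 < ε := lt_min (by linarith) (by linarith)
  have hεδ : ε ≤ δ / 8 := min_le_left _ _
  set uε : ℝ := ε ^ 2 / L ^ 2 with huε
  have huεpos : 0 < uε := by positivity
  set s₀ : ℝ := max (L / hmin) (Real.log (2 * T / δ) / (hmin * uε)) + 1 with hs₀
  have hs₀pos : 0 < s₀ := by
    have h1 : 0 < L / hmin := by positivity
    have h2 : L / hmin ≤ max (L / hmin) (Real.log (2 * T / δ) / (hmin * uε)) :=
      le_max_left _ _
    rw [hs₀]; linarith
  refine ⟨s₀, hs₀pos, ?_⟩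
  intro s hs f hf
  have hspos : 0 < s := lt_of_lt_of_le hs₀pos hs
  have hsL : L ≤ s * hmin := by
    have h2 : L / hmin ≤ s := le_trans (le_trans (le_max_left _ _) (by rw [hs₀]; linarith)) hs
    calc L = (L / hmin) * hmin := by field_simp
    _ ≤ s * hmin := by nlinarith
  have hslog : Real.log (2 * T / δ) ≤ s * (hmin * uε) := by
    have h2 : Real.log (2 * T / δ) / (hmin * uε) ≤ s :=
      le_trans (le_trans (le_max_right _ _) (by rw [hs₀]; linarith)) hs
    have h3 : 0 < hmin * uε := by positivity
    calc Real.log (2 * T / δ) = (Real.log (2 * T / δ) / (hmin * uε)) * (hmin * uε) := by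
          field_simp
    _ ≤ s * (hmin * uε) := mul_le_mul_of_nonneg_right h2 h3.le
  set b : ℝ := exp (-(s * hmin * uε)) with hb
  have hbpos : 0 < b := exp_pos _
  have hbd : b ≤ δ / (2 * T) := by
    have h1 : δ / (2 * T) = exp (Real.log (δ / (2 * T))) := (exp_log (by positivity)).symm
    rw [hb, h1]
    apply exp_le_exp.2
    have h2 : Real.log (δ / (2 * T)) = -Real.log (2 * T / δ) := by
      rw [← Real.log_inv]
      congr 1
      field_simp
    rw [h2]
    nlinarith [hslog]
  have hbT : T * b ≤ δ / 2 := by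
    calc T * b ≤ T * (δ / (2 * T)) := by nlinarith
    _ = δ / 2 := by field_simp
  have hsum : 2 * ε + T * b ≤ δ := by linarith
  have hbform : b = exp (-(s * hmin * (ε ^ 2 / L ^ 2))) := by rw [hb, huε]
  -- the RHS integrand
  set Q : (Fin d → ℝ) → ℝ := fun x =>
    exp (lam * η x) / L * |f x| ^ 2 *
      exp (2 * s * ((exp (lam * η x) - exp (2 * lam * M)) / L)) with hQ
  have hQnonneg : ∀ x, 0 ≤ Q x := by
    intro x; rw [hQ]; positivity
  -- integrability of Q on Ω
  have hf2 : Integrable (fun x => f x ^ 2) (volume.restrict Ω) := hf.integrable_sq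
  have hQmeas : AEStronglyMeasurable Q (volume.restrict Ω) := by
    apply AEStronglyMeasurable.mul
    apply AEStronglyMeasurable.mul
    · exact ((measurable_exp.comp (hηmeas.const_mul lam)).div_const L).aestronglyMeasurable
    · exact (hf.1.norm.pow 2)
    · exact (measurable_exp.comp
        ((((measurable_exp.comp (hηmeas.const_mul lam)).sub measurable_const).div_const
          L).const_mul (2 * s))).aestronglyMeasurable
  have hQint : Integrable Q (volume.restrict Ω) := by
    apply Integrable.mono' (hf2.const_mul (exp (lam * M) / L)) hQmeas
    rw [ae_restrict_iff' hΩm]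
    filter_upwards with x hx
    have hηx := hη x hx
    have hA : exp (lam * η x) ≤ exp (lam * M) := exp_le_exp.2 (by nlinarith [hηx.2])
    have hAB : exp (lam * η x) ≤ exp (2 * lam * M) := exp_le_exp.2 (by nlinarith [hηx.2])
    have hE1 : exp (2 * s * ((exp (lam * η x) - exp (2 * lam * M)) / L)) ≤ 1 := by
      apply exp_le_one_iff.2
      have : exp (lam * η x) - exp (2 * lam * M) ≤ 0 := by linarith
      have h4 : (exp (lam * η x) - exp (2 * lam * M)) / L ≤ 0 :=
        div_nonpos_of_nonpos_of_nonneg this hLpos.le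
      nlinarith
    rw [Real.norm_eq_abs, abs_of_nonneg (hQnonneg x), hQ]
    simp only [sq_abs]
    calc exp (lam * η x) / L * f x ^ 2 *
          exp (2 * s * ((exp (lam * η x) - exp (2 * lam * M)) / L))
        ≤ exp (lam * M) / L * f x ^ 2 * 1 := by gcongr
    _ = exp (lam * M) / L * f x ^ 2 := by ring
  -- key pointwise (in x) bound on the inner time integral
  have key : ∀ x ∈ Ω,
      (∫ t in Ioo (0 : ℝ) T,
          (exp (lam * η x) / (t * (T - t))) * |f x| ^ 2 *
            exp (2 * s * ((exp (lam * η x) - exp (2 * lam * M)) / (t * (T - t)))))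
        ≤ δ * Q x := by
    intro x hx
    have hηx := hη x hx
    have hABm : exp (lam * η x) ≤ exp (lam * M) :=
      exp_le_exp.2 (mul_le_mul_of_nonneg_left hηx.2 hlam.le)
    have hhm : hmin ≤ exp (2 * lam * M) - exp (lam * η x) := by
      rw [hhmin]; linarith
    exact aux_int T L (exp (lam * η x)) (exp (2 * lam * M)) (|f x| ^ 2) s hmin ε b δ
      hT hL (exp_pos _) (by positivity) hminpos hhm hsL hspos hεpos hbform hsum
  -- integrate over Ω
  have final : (∫ x in Ω, ∫ t in Ioo (0 : ℝ) T,
      (exp (lam * η x) / (t * (T - t))) * |f x| ^ 2 *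
        exp (2 * s * ((exp (lam * η x) - exp (2 * lam * M)) / (t * (T - t)))))
        ≤ ∫ x in Ω, δ * Q x := by
    apply integral_mono_of_nonneg
    · apply ae_of_all
      intro x
      apply setIntegral_nonneg measurableSet_Ioo
      intro t ht
      obtain ⟨ht0, htT⟩ := ht
      have hℓpos : 0 < t * (T - t) := by nlinarith
      positivity
    · exact hQint.const_mul δ
    · filter_upwards [ae_restrict_mem hΩm] with x hx
      exact key x hx
  calc (∫ x in Ω, ∫ t in Ioo (0 : ℝ) T,
      (exp (lam * η x) / (t * (T - t))) * |f x| ^ 2 *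
        exp (2 * s * ((exp (lam * η x) - exp (2 * lam * M)) / (t * (T - t)))))
      ≤ ∫ x in Ω, δ * Q x := final
  _ = δ * ∫ x in Ω, Q x := by rw [MeasureTheory.integral_const_mul]
end
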